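/- Let P = {(x,y,z) ∈ ℕ³ : y = G₋₁(x,z) + 1} (interpreting the equation in ℤ, so y = 0 when G₋₁(x,z) = −1). Then: (a) (0,0,0) ∈ P; (b) no position in P has an option in P; (c) every position not in P with x + y + z > 0 has an option in P. Here an option of (x,y,z) is any of (x',y,z) with x' < x, (x,y',z) with y' < y, (x,y,z') with z' < z, and additionally (0,0,0) is an option of (x,0,z) for any x,z. Consequently, under normal play convention, (x,y,z) is a previous-player-win if and only if y = G₋₁(x,z) + 1. -/

import Mathlib

/-- mex of a finite set of integers: least nonnegative integer not in the set
(negative elements are ignored). -/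
noncomputable def mexZ (S : Finset ℤ) : ℤ := ((sInf {n : ℕ | (n : ℤ) ∉ S} : ℕ) : ℤ)

/-- `G₋₁(x,y)`: `G₋₁(0,0) = -1` and for `x + y > 0`,
`G₋₁(x,y) = mex({G₋₁(x',y) : x' < x} ∪ {G₋₁(x,y') : y' < y})`. -/
noncomputable def Gm1 : ℕ → ℕ → ℤ
  | x, y =>
    if x + y = 0 then -1 else
    mexZ (((Finset.range x).attach.image fun x' => Gm1 x'.1 y) ∪
          ((Finset.range y).attach.image fun y' => Gm1 x y'.1))
termination_by x y => x + y
decreasing_by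
  · have := x'.2; simp only [Finset.mem_range] at this; omega
  · have := y'.2; simp only [Finset.mem_range] at this; omega

/-- A move in restricted two-player goishi hiroi: decrease exactly one coordinate,
or, from a position with middle coordinate `0`, move directly to `(0,0,0)`. -/
def GHMove (p q : ℕ × ℕ × ℕ) : Prop :=
  (q.2.1 = p.2.1 ∧ q.2.2 = p.2.2 ∧ q.1 < p.1) ∨
  (q.1 = p.1 ∧ q.2.2 = p.2.2 ∧ q.2.1 < p.2.1) ∨
  (q.1 = p.1 ∧ q.2.1 = p.2.1 ∧ q.2.2 < p.2.2) ∨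
  (p.2.1 = 0 ∧ q = (0, 0, 0) ∧ p ≠ (0, 0, 0))

theorem GHMove_lt {p q : ℕ × ℕ × ℕ} (h : GHMove p q) :
    q.1 + q.2.1 + q.2.2 < p.1 + p.2.1 + p.2.2 := by
  rcases h with ⟨_, _, _⟩ | ⟨_, _, _⟩ | ⟨_, _, _⟩ | ⟨h1, h2, h3⟩
  · omega
  · omega
  · omega
  · subst h2; simp only [ne_eq, Prod.ext_iff] at h3 ⊢; omega

/-- Previous-player-win positions of goishi hiroi under normal play:
a position is a previous-player win iff every option is not one. -/
def GHNormalP : ℕ × ℕ × ℕ → Prop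
  | p => ∀ q, GHMove p q → ¬ GHNormalP q
termination_by p => p.1 + p.2.1 + p.2.2
decreasing_by exact GHMove_lt ‹GHMove _ _›


lemma mexZ_nonneg (S : Finset ℤ) : 0 ≤ mexZ S := Int.ofNat_nonneg _

lemma mexZ_not_mem (S : Finset ℤ) : mexZ S ∉ S := by
  have hne : {n : ℕ | (n : ℤ) ∉ S}.Nonempty := by
    refine ⟨S.sup Int.toNat + 1, fun h => ?_⟩
    have h2 := Finset.le_sup (f := Int.toNat) h
    simp only [Int.toNat_natCast] at h2
    omega
  exact Nat.sInf_mem hne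

lemma mexZ_mem_of_lt (S : Finset ℤ) (n : ℕ) (h : (n : ℤ) < mexZ S) : (n : ℤ) ∈ S := by
  unfold mexZ at h
  have hn : n < sInf {n : ℕ | (n : ℤ) ∉ S} := by exact_mod_cast h
  have := Nat.notMem_of_lt_sInf hn
  simpa using this

noncomputable def GS (x z : ℕ) : Finset ℤ :=
  ((Finset.range x).attach.image fun x' => Gm1 x'.1 z) ∪
  ((Finset.range z).attach.image fun z' => Gm1 x z'.1)

lemma mem_GS {v : ℤ} {x z : ℕ} :
    v ∈ GS x z ↔ (∃ x' < x, Gm1 x' z = v) ∨ (∃ z' < z, Gm1 x z' = v) := by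
  simp only [GS, Finset.mem_union, Finset.mem_image, Finset.mem_attach, true_and,
    Subtype.exists, Finset.mem_range]
  constructor
  · rintro (⟨a, ha, rfl⟩ | ⟨a, ha, rfl⟩)
    · exact Or.inl ⟨a, ha, rfl⟩
    · exact Or.inr ⟨a, ha, rfl⟩
  · rintro (⟨a, ha, rfl⟩ | ⟨a, ha, rfl⟩)
    · exact Or.inl ⟨a, ha, rfl⟩
    · exact Or.inr ⟨a, ha, rfl⟩

lemma Gm1_zero : Gm1 0 0 = -1 := by rw [Gm1]; simp

lemma Gm1_eq {x z : ℕ} (h : x + z ≠ 0) : Gm1 x z = mexZ (GS x z) := by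
  rw [Gm1, GS]; simp [h]; intro h1 h2; exact absurd (by omega) h

lemma Gm1_nonneg {x z : ℕ} (h : x + z ≠ 0) : 0 ≤ Gm1 x z := by
  rw [Gm1_eq h]; exact mexZ_nonneg _

lemma Gm1_not_mem {x z : ℕ} (h : x + z ≠ 0) : Gm1 x z ∉ GS x z := by
  rw [Gm1_eq h]; exact mexZ_not_mem _

lemma Gm1_ne_left {x x' z : ℕ} (h : x' < x) : Gm1 x' z ≠ Gm1 x z := fun he =>
  Gm1_not_mem (by omega) (mem_GS.2 (Or.inl ⟨x', h, he⟩))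

lemma Gm1_ne_right {x z z' : ℕ} (h : z' < z) : Gm1 x z' ≠ Gm1 x z := fun he =>
  Gm1_not_mem (by omega) (mem_GS.2 (Or.inr ⟨z', h, he⟩))

lemma Gm1_exists {x z : ℕ} {v : ℤ} (h0 : 0 ≤ v) (h : v < Gm1 x z) :
    (∃ x' < x, Gm1 x' z = v) ∨ (∃ z' < z, Gm1 x z' = v) := by
  have hxz : x + z ≠ 0 := by
    rintro h'
    obtain ⟨rfl, rfl⟩ : x = 0 ∧ z = 0 := by omega
    rw [Gm1_zero] at h; omega
  rw [Gm1_eq hxz] at h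
  obtain ⟨n, rfl⟩ := Int.eq_ofNat_of_zero_le h0
  exact mem_GS.1 (mexZ_mem_of_lt _ n h)

lemma Gm1_ge_neg_one (x z : ℕ) : -1 ≤ Gm1 x z := by
  by_cases h : x + z = 0
  · obtain ⟨rfl, rfl⟩ : x = 0 ∧ z = 0 := by omega
    rw [Gm1_zero]
  · linarith [Gm1_nonneg h]

lemma GH_partB {p q : ℕ × ℕ × ℕ} (hp : (p.2.1 : ℤ) = Gm1 p.1 p.2.2 + 1)
    (hm : GHMove p q) : ¬ ((q.2.1 : ℤ) = Gm1 q.1 q.2.2 + 1) := by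
  obtain ⟨x, y, z⟩ := p
  obtain ⟨a, b, c⟩ := q
  dsimp only at hp ⊢
  rcases hm with ⟨h1, h2, h3⟩ | ⟨h1, h2, h3⟩ | ⟨h1, h2, h3⟩ | ⟨h1, h2, h3⟩ <;>
      simp only [Prod.mk.injEq, ne_eq] at *
  · intro hq
    rw [h1, h2] at hq
    exact Gm1_ne_left (z := z) h3 (by omega)
  · intro hq
    rw [h1, h2] at hq
    omega
  · intro hq
    rw [h1, h2] at hq
    exact Gm1_ne_right (x := x) h3 (by omega)
  · -- p = (x, 0, z) with 0 = Gm1 x z + 1, so Gm1 x z = -1, so x = z = 0, contra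
    exfalso
    have hg : Gm1 x z = -1 := by omega
    have hxz : x + z = 0 := by
      by_contra h
      have := Gm1_nonneg h
      omega
    omega

lemma GH_partC {p : ℕ × ℕ × ℕ} (hp : ¬ ((p.2.1 : ℤ) = Gm1 p.1 p.2.2 + 1))
    (hpos : p.1 + p.2.1 + p.2.2 > 0) :
    ∃ q, GHMove p q ∧ (q.2.1 : ℤ) = Gm1 q.1 q.2.2 + 1 := by
  obtain ⟨x, y, z⟩ := p
  dsimp only at hp hpos ⊢
  rcases lt_or_gt_of_ne hp with hlt | hgt
  · -- y ≤ Gm1 x z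
    rcases Nat.eq_zero_or_pos y with rfl | hy
    · -- special move to (0,0,0)
      refine ⟨(0, 0, 0), Or.inr (Or.inr (Or.inr ⟨rfl, rfl, ?_⟩)), ?_⟩
      · simp only [ne_eq, Prod.mk.injEq]
        omega
      · simp [Gm1_zero]
    · have h0 : (0 : ℤ) ≤ (y : ℤ) - 1 := by
        have : (1 : ℤ) ≤ (y : ℤ) := by exact_mod_cast hy
        omega
      have hlt' : (y : ℤ) - 1 < Gm1 x z := by omega
      rcases Gm1_exists h0 hlt' with ⟨x', hx', he⟩ | ⟨z', hz', he⟩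
      · exact ⟨(x', y, z), Or.inl ⟨rfl, rfl, hx'⟩, by simp only; omega⟩
      · exact ⟨(x, y, z'), Or.inr (Or.inr (Or.inl ⟨rfl, rfl, hz'⟩)), by simp only; omega⟩
  · -- y > Gm1 x z + 1 : decrease y to Gm1 x z + 1
    have hge := Gm1_ge_neg_one x z
    set y' : ℕ := (Gm1 x z + 1).toNat with hy'
    have hy'c : (y' : ℤ) = Gm1 x z + 1 := Int.toNat_of_nonneg (by omega)
    refine ⟨(x, y', z), Or.inr (Or.inl ⟨rfl, rfl, ?_⟩), by simpa using hy'c⟩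
    show y' < y
    omega

theorem goishi_hiroi_normal
    (P : Set (ℕ × ℕ × ℕ)) (hP : P = {p | (p.2.1 : ℤ) = Gm1 p.1 p.2.2 + 1}) :
    (0, 0, 0) ∈ P ∧
    (∀ p ∈ P, ∀ q, GHMove p q → q ∉ P) ∧
    (∀ p : ℕ × ℕ × ℕ, p ∉ P → p.1 + p.2.1 + p.2.2 > 0 → ∃ q, GHMove p q ∧ q ∈ P) ∧
    (∀ x y z : ℕ, GHNormalP (x, y, z) ↔ (y : ℤ) = Gm1 x z + 1) := by
  subst hP
  have hzero : ((0,0,0) : ℕ × ℕ × ℕ) ∈ {p : ℕ × ℕ × ℕ | (p.2.1 : ℤ) = Gm1 p.1 p.2.2 + 1} := by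
    simp [Set.mem_setOf_eq, Gm1_zero]
  refine ⟨hzero, fun p hp q hq => GH_partB hp hq, fun p hp hpos => GH_partC hp hpos, ?_⟩
  have key : ∀ n : ℕ, ∀ p : ℕ × ℕ × ℕ, p.1 + p.2.1 + p.2.2 = n →
      (GHNormalP p ↔ (p.2.1 : ℤ) = Gm1 p.1 p.2.2 + 1) := by
    intro n
    induction n using Nat.strong_induction_on with
    | _ n ih =>
      intro p hp
      rw [GHNormalP]
      constructor
      · intro h
        by_contra hnp
        have hpos : p.1 + p.2.1 + p.2.2 > 0 := by
          rcases Nat.eq_zero_or_pos (p.1 + p.2.1 + p.2.2) with h0 | h0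
          · exfalso
            obtain ⟨x, y, z⟩ := p
            simp only at h0 hnp
            obtain ⟨rfl, rfl, rfl⟩ : x = 0 ∧ y = 0 ∧ z = 0 := by omega
            exact hnp (by simp [Gm1_zero])
          · exact h0
        obtain ⟨q, hq, hqP⟩ := GH_partC hnp hpos
        have hlt := GHMove_lt hq
        exact h q hq ((ih _ (by omega) q rfl).2 hqP)
      · intro hpP q hq hqN
        have hlt := GHMove_lt hq
        exact GH_partB hpP hq ((ih _ (by omega) q rfl).1 hqN)
  intro x y z
  exact key _ (x, y, z) rfl
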